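/- arXiv:1009.0792 — 2 statements merged into one kernel-verified Lean document; each statement's English description precedes it below -/
import Mathlib

section
/- Let δ > 0 be a constant. Then asymptotically almost surely w(G(n,1/2)) ≥ (1−δ) log₂ n. -/
open scoped Classical ENNReal

/-- The infinite rooted `s`-branching tree on `ℕ`, labeled level by level:
the children of vertex `i` are `s*i+1, …, s*i+s`; `0` is the root. -/
def branchTree (s : ℕ) : SimpleGraph ℕ where
  Adj i j := (∃ t < s, j = s * i + t + 1) ∨ (∃ t < s, i = s * j + t + 1)
  symm := ⟨fun i j h => Or.symm h⟩
  loopless := by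
    constructor
    intro i h
    rcases h with ⟨t, ht, h⟩ | ⟨t, ht, h⟩ <;>
    · have h1 : i ≤ s * i := Nat.le_mul_of_pos_left i (by omega)
      omega

/-- The level (distance from the root `0`) of a vertex of `branchTree s`. -/
def treeLevel (s : ℕ) : ℕ → ℕ
  | 0 => 0
  | j + 1 => treeLevel s (j / s) + 1
decreasing_by exact Nat.lt_succ_of_le (Nat.div_le_self j s)

/-- `φ ∈ Hom(T^d, G)` is cold if there is a vertex `a` of `G` such that for every `k`
no homomorphism `ψ` agrees with `φ` on the vertices at distance `k` from the root and
has `ψ(root) = a`. -/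
def IsCold {V : Type*} (G : SimpleGraph V) (d : ℕ) (φ : branchTree d →g G) : Prop :=
  ∃ a : V, ∀ k : ℕ, ¬ ∃ ψ : branchTree d →g G,
    (∀ x : ℕ, treeLevel d x = k → ψ x = φ x) ∧ ψ 0 = a

/-- `G` is `d`-warm if `Hom(T^{d-2}, G)` contains no cold maps. -/
def IsWarm {V : Type*} (G : SimpleGraph V) (d : ℕ) : Prop :=
  ∀ φ : branchTree (d - 2) →g G, ¬ IsCold G (d - 2) φ

/-- The warmth of `G`: the largest `d` for which `G` is `d`-warm. -/
noncomputable def warmth {V : Type*} (G : SimpleGraph V) : ℕ∞ :=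
  sSup ((fun d : ℕ => (d : ℕ∞)) '' {d : ℕ | IsWarm G d})

/-- The graph `Hom(H, G)`: vertices are the graph homomorphisms `H → G`, with two
homomorphisms adjacent when they differ at exactly one vertex of `H`. -/
def homGraph {V W : Type*} (H : SimpleGraph V) (G : SimpleGraph W) :
    SimpleGraph (H →g G) where
  Adj φ ψ := ∃! x : V, φ x ≠ ψ x
  symm := by
    constructor
    rintro φ ψ ⟨x, hx, hu⟩
    exact ⟨x, Ne.symm hx, fun y hy => hu y (Ne.symm hy)⟩
  loopless := by
    constructor
    rintro φ ⟨x, hx, -⟩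
    exact hx rfl

/-- `G` is `d`-mobile if for every finite simple graph `H` of maximum degree at most
`d - 2`, the graph `Hom(H, G)` is connected or empty. -/
def IsMobile {V : Type*} (G : SimpleGraph V) (d : ℕ) : Prop :=
  ∀ (m : ℕ) (H : SimpleGraph (Fin m)), (∀ x, H.degree x ≤ d - 2) →
    ((homGraph H G).Connected ∨ IsEmpty (H →g G))

/-- The mobility of `G`: the largest `d` for which `G` is `d`-mobile. -/
noncomputable def mobility {V : Type*} (G : SimpleGraph V) : ℕ∞ :=
  sSup ((fun d : ℕ => (d : ℕ∞)) '' {d : ℕ | IsMobile G d})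

/-- The probability of a fixed graph `G` on `{1, …, n}` under the Erdős–Rényi
distribution `G(n,p)`: each of the `n.choose 2` possible edges appears independently
with probability `p`. -/
noncomputable def erWeight (n : ℕ) (p : ℝ) (G : SimpleGraph (Fin n)) : ℝ :=
  p ^ G.edgeFinset.card * (1 - p) ^ (n.choose 2 - G.edgeFinset.card)

/-- The probability that the Erdős–Rényi random graph `G(n,p)` satisfies `Q`. -/
noncomputable def erProb (n : ℕ) (p : ℝ) (Q : SimpleGraph (Fin n) → Prop) : ℝ :=
  ∑ G ∈ Finset.univ.filter Q, erWeight n p G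

/-- The probability that a uniformly random `d`-regular graph on `n` labeled
vertices satisfies `Q`. -/
noncomputable def regProb (n d : ℕ) (Q : SimpleGraph (Fin n) → Prop) : ℝ :=
  ((Finset.univ.filter fun G : SimpleGraph (Fin n) => G.IsRegularOfDegree d ∧ Q G).card : ℝ) /
    ((Finset.univ.filter fun G : SimpleGraph (Fin n) => G.IsRegularOfDegree d).card : ℝ)

/-- The truncated `s`-branching tree `T^s_v` on `v` vertices `0, …, v-1`. -/
def truncTree (s v : ℕ) : SimpleGraph (Fin v) := (branchTree s).comap Fin.val

/-- `D(T^s_v)`: the root together with the set `L` of leaves of `T^s_v`. -/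
def treeD (s v : ℕ) : Set (Fin v) := {x | (x : ℕ) = 0 ∨ v ≤ s * (x : ℕ) + 1}

/-- `f : D(T^s_v) → V(H)` is `H`-extendable if there is a graph homomorphism
`φ : T^s_v → H` whose restriction to `D(T^s_v)` is `f`. -/
def Extendable {W : Type*} (H : SimpleGraph W) (s v : ℕ) (f : treeD s v → W) : Prop :=
  ∃ φ : truncTree s v →g H, ∀ x : treeD s v, φ (x : Fin v) = f x

/-- `H` has property `P^s_v` if every `f : D(T^s_v) → V(H)` is `H`-extendable. -/
def PropertyP {W : Type*} (H : SimpleGraph W) (s v : ℕ) : Prop :=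
  ∀ f : treeD s v → W, Extendable H s v f


/-! ### Auxiliary machinery for the proof -/

section Aux

open Filter Real

/-- Strictly increasing pairs of vertices: the possible edges. -/
abbrev StrictPairs (n : ℕ) := {q : Fin n × Fin n // q.1 < q.2}

noncomputable def graphEquiv (n : ℕ) : SimpleGraph (Fin n) ≃ (StrictPairs n → Bool) where
  toFun G e := decide (G.Adj e.1.1 e.1.2)
  invFun f := SimpleGraph.fromRel (fun i j => ∃ h : i < j, f ⟨(i,j), h⟩ = true)
  left_inv G := by
    ext i j
    simp only [SimpleGraph.fromRel_adj, decide_eq_true_eq]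
    constructor
    · rintro ⟨hne, ⟨h, ha⟩ | ⟨h, ha⟩⟩
      · exact ha
      · exact ha.symm
    · intro h
      refine ⟨G.ne_of_adj h, ?_⟩
      rcases lt_or_gt_of_ne (G.ne_of_adj h) with hlt | hlt
      · exact Or.inl ⟨hlt, h⟩
      · exact Or.inr ⟨hlt, h.symm⟩
  right_inv f := by
    funext e
    obtain ⟨⟨i, j⟩, hij⟩ := e
    simp only [SimpleGraph.fromRel_adj]
    have : (¬ j < i) := le_of_lt hij |>.not_gt
    by_cases hf : f ⟨(i, j), hij⟩ = true
    · simp [hf, hij.ne, hij, this]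
    · simp only [Bool.not_eq_true] at hf
      simp [hf, hij.ne, hij, this]

theorem graphEquiv_adj (n : ℕ) (G : SimpleGraph (Fin n)) (e : StrictPairs n) :
    graphEquiv n G e = true ↔ G.Adj e.1.1 e.1.2 := by
  simp [graphEquiv]

def strictPairsEquiv (n : ℕ) : StrictPairs n ≃ Σ j : Fin n, Fin j.val where
  toFun e := ⟨e.1.2, ⟨e.1.1, e.2⟩⟩
  invFun x := ⟨(⟨x.2.val, x.2.isLt.trans x.1.isLt⟩, x.1), x.2.isLt⟩
  left_inv e := by
    obtain ⟨⟨i, j⟩, hij⟩ := e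
    rfl
  right_inv x := by
    obtain ⟨j, i⟩ := x
    rfl

theorem card_strictPairs (n : ℕ) : Fintype.card (StrictPairs n) = n.choose 2 := by
  rw [Fintype.card_congr (strictPairsEquiv n), Fintype.card_sigma]
  simp only [Fintype.card_fin]
  rw [Fin.sum_univ_eq_sum_range (fun i => i) n, Nat.choose_two_right]
  have := Finset.sum_range_id_mul_two n
  omega

theorem card_graphs (n : ℕ) : Fintype.card (SimpleGraph (Fin n)) = 2 ^ n.choose 2 := by
  rw [Fintype.card_congr (graphEquiv n), Fintype.card_fun, Fintype.card_bool, card_strictPairs]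

theorem card_graphs' (n : ℕ) :
    (Finset.univ : Finset (SimpleGraph (Fin n))).card = 2 ^ n.choose 2 := by
  rw [Finset.card_univ, card_graphs]

theorem erWeight_half (n : ℕ) (G : SimpleGraph (Fin n)) :
    erWeight n (1/2) G = (1/2 : ℝ) ^ n.choose 2 := by
  have hle : G.edgeFinset.card ≤ n.choose 2 := by
    simpa using G.card_edgeFinset_le_card_choose_two
  have h1 : (1:ℝ) - 1/2 = 1/2 := by norm_num
  rw [erWeight, h1, ← pow_add, Nat.add_sub_cancel' hle]

theorem erProb_half (n : ℕ) (Q : SimpleGraph (Fin n) → Prop) :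
    erProb n (1/2) Q = ((Finset.univ.filter Q).card : ℝ) * (1/2 : ℝ) ^ n.choose 2 := by
  rw [erProb, Finset.sum_congr rfl fun G _ => erWeight_half n G, Finset.sum_const, nsmul_eq_mul]

theorem erProb_compl (n : ℕ) (Q : SimpleGraph (Fin n) → Prop) :
    erProb n (1/2) Q = 1 - erProb n (1/2) (fun G => ¬ Q G) := by
  have hsplit : (Finset.univ.filter Q).card + (Finset.univ.filter (fun G => ¬ Q G)).card
      = 2 ^ n.choose 2 := by
    rw [Finset.card_filter_add_card_filter_not, card_graphs']
  have h2 : ((2:ℝ))^(n.choose 2) * (1/2:ℝ)^(n.choose 2) = 1 := by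
    rw [← mul_pow]; norm_num
  have hs : ((Finset.univ.filter Q).card : ℝ)
      = 2^(n.choose 2) - ((Finset.univ.filter (fun G => ¬ Q G)).card : ℝ) := by
    have : ((Finset.univ.filter Q).card : ℝ)
        + ((Finset.univ.filter (fun G => ¬ Q G)).card : ℝ) = 2 ^ (n.choose 2) := by
      exact_mod_cast hsplit
    linarith
  rw [erProb_half, erProb_half, hs, sub_mul, h2]
  congr!

theorem erProb_mono (n : ℕ) (Q Q' : SimpleGraph (Fin n) → Prop) (h : ∀ G, Q G → Q' G) :
    erProb n (1/2) Q ≤ erProb n (1/2) Q' := by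
  rw [erProb_half, erProb_half]
  have hsub : Finset.univ.filter Q ⊆ Finset.univ.filter Q' := by
    intro G hG
    simp only [Finset.mem_filter, Finset.mem_univ, true_and] at *
    exact h G hG
  have := Finset.card_le_card hsub
  have hw : (0:ℝ) ≤ (1/2:ℝ)^(n.choose 2) := by positivity
  exact mul_le_mul_of_nonneg_right (by exact_mod_cast this) hw

theorem erProb_one_of_forall (n : ℕ) (Q : SimpleGraph (Fin n) → Prop) (h : ∀ G, Q G) :
    erProb n (1/2) Q = 1 := by
  rw [erProb_half]
  have : Finset.univ.filter Q = Finset.univ := Finset.filter_true_of_mem (fun G _ => h G)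
  rw [this, card_graphs']
  rw [show ((2 ^ n.choose 2 : ℕ) : ℝ) = (2:ℝ) ^ n.choose 2 by push_cast; ring, ← mul_pow]
  norm_num

theorem erProb_le_one (n : ℕ) (Q : SimpleGraph (Fin n) → Prop) :
    erProb n (1/2) Q ≤ 1 := by
  calc erProb n (1/2) Q ≤ erProb n (1/2) (fun _ => True) :=
        erProb_mono n _ _ (fun G _ => trivial)
    _ = 1 := erProb_one_of_forall n _ fun _ => trivial

/-! #### Counting graphs where some vertex set has no common neighbor -/

section Count

variable {n : ℕ} (S : Finset (Fin n))

def crossP (e : StrictPairs n) : Prop := ¬ ((e.1.1 ∈ S) ↔ (e.1.2 ∈ S))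

noncomputable def crossEquiv : {e : StrictPairs n // crossP S e} ≃
    ({v : Fin n // v ∉ S} × {v : Fin n // v ∈ S}) where
  toFun e :=
    if h : e.1.1.1 ∈ S then
      (⟨e.1.1.2, fun hc => e.2 ⟨fun _ => hc, fun _ => h⟩⟩, ⟨e.1.1.1, h⟩)
    else
      (⟨e.1.1.1, h⟩, ⟨e.1.1.2, by
        by_contra hc
        exact e.2 ⟨fun h2 => absurd h2 h, fun h2 => absurd h2 hc⟩⟩)
  invFun x :=
    if h : x.1.1 < x.2.1 then
      ⟨⟨(x.1.1, x.2.1), h⟩, fun hiff => x.1.2 (hiff.mpr x.2.2)⟩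
    else
      ⟨⟨(x.2.1, x.1.1), by
        rcases lt_trichotomy x.1.1 x.2.1 with hlt | heq | hgt
        · exact absurd hlt h
        · exact absurd (heq ▸ x.2.2) x.1.2
        · exact hgt⟩, fun hiff => x.1.2 (hiff.mp x.2.2)⟩
  left_inv e := by
    obtain ⟨⟨⟨i, j⟩, hij⟩, hc⟩ := e
    by_cases h : i ∈ S
    · have hj : j ∉ S := fun hj => hc ⟨fun _ => hj, fun _ => h⟩
      simp only [dif_pos h]
      have : ¬ (j < i) := (le_of_lt hij).not_gt
      simp only [dif_neg this]
    · simp only [dif_neg h, dif_pos hij]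
  right_inv x := by
    obtain ⟨⟨u, hu⟩, ⟨v, hv⟩⟩ := x
    by_cases h : u < v
    · simp only [dif_pos h]
      have : u ∉ S := hu
      simp only [dif_neg this]
    · have hne : v ≠ u := fun he => hu (he ▸ hv)
      have hlt : v < u := by
        rcases lt_trichotomy u v with h1 | h1 | h1
        · exact absurd h1 h
        · exact absurd (h1 ▸ hv) hu
        · exact h1
      simp only [dif_neg h, dif_pos hv]

/-- The event that every vertex outside `S` misses some vertex of `S`. -/
def BadS (G : SimpleGraph (Fin n)) : Prop := ∀ u ∉ S, ∃ v ∈ S, ¬ G.Adj u v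

noncomputable def prodSubtypeFst {α β : Type*} (p : α → Prop) :
    {x : α × β // p x.1} ≃ {a // p a} × β :=
  ⟨fun x => (⟨x.1.1, x.2⟩, x.1.2), fun y => ⟨(y.1.val, y.2), y.1.property⟩,
    fun _ => rfl, fun _ => rfl⟩

noncomputable def bigEquiv : SimpleGraph (Fin n) ≃
    (({v : Fin n // v ∉ S} × {v : Fin n // v ∈ S}) → Bool) ×
      ({e : StrictPairs n // ¬ crossP S e} → Bool) :=
  (graphEquiv n).trans <|
    ((Equiv.sumCompl (crossP S)).symm.arrowCongr (Equiv.refl Bool)).trans <|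
      (Equiv.sumArrowEquivProdArrow _ _ _).trans <|
        Equiv.prodCongr ((crossEquiv S).arrowCongr (Equiv.refl Bool)) (Equiv.refl _)

theorem bigEquiv_fst (G : SimpleGraph (Fin n)) (u : {v : Fin n // v ∉ S})
    (v : {v : Fin n // v ∈ S}) :
    (bigEquiv S G).1 (u, v) = true ↔ G.Adj u.1 v.1 := by
  obtain ⟨u, hu⟩ := u
  obtain ⟨v, hv⟩ := v
  have h1 : (bigEquiv S G).1 (⟨u, hu⟩, ⟨v, hv⟩) =
      graphEquiv n G ((crossEquiv S).symm (⟨u, hu⟩, ⟨v, hv⟩)).1 := rfl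
  rw [h1, graphEquiv_adj]
  unfold crossEquiv
  by_cases h : u < v
  · simp only [Equiv.coe_fn_symm_mk, dif_pos h]
  · simp only [Equiv.coe_fn_symm_mk, dif_neg h]
    exact ⟨fun ha => ha.symm, fun ha => ha.symm⟩

theorem badS_iff (G : SimpleGraph (Fin n)) :
    BadS S G ↔ ∀ u : {v : Fin n // v ∉ S}, ∃ v : {v : Fin n // v ∈ S},
      (bigEquiv S G).1 (u, v) = false := by
  constructor
  · intro hb u
    obtain ⟨v, hv, hadj⟩ := hb u.1 u.2
    refine ⟨⟨v, hv⟩, ?_⟩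
    rw [← Bool.not_eq_true, bigEquiv_fst]
    exact hadj
  · intro hb u hu
    obtain ⟨v, hv⟩ := hb ⟨u, hu⟩
    refine ⟨v.1, v.2, ?_⟩
    rw [← bigEquiv_fst S G ⟨u, hu⟩ v, hv]
    simp

set_option maxHeartbeats 1000000 in
theorem card_badS (r : ℕ) (hS : S.card = r) :
    Fintype.card {G : SimpleGraph (Fin n) // BadS S G} =
      (2 ^ r - 1) ^ (n - r) * 2 ^ Fintype.card {e : StrictPairs n // ¬ crossP S e} := by
  have cardIn : Fintype.card {v : Fin n // v ∈ S} = r := by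
    simpa using (Fintype.card_coe S).trans hS
  have cardOut : Fintype.card {v : Fin n // v ∉ S} = n - r := by
    rw [Fintype.card_subtype_compl, cardIn, Fintype.card_fin]
  have e1 : {G : SimpleGraph (Fin n) // BadS S G} ≃
      {x : (({v : Fin n // v ∉ S} × {v : Fin n // v ∈ S}) → Bool) ×
          ({e : StrictPairs n // ¬ crossP S e} → Bool) //
        ∀ u : {v : Fin n // v ∉ S}, ∃ v : {v : Fin n // v ∈ S}, x.1 (u, v) = false} :=
    Equiv.subtypeEquiv (bigEquiv S) (fun G => badS_iff S G)
  have e2 := prodSubtypeFst (β := ({e : StrictPairs n // ¬ crossP S e} → Bool))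
    (fun g : (({v : Fin n // v ∉ S} × {v : Fin n // v ∈ S}) → Bool) =>
      ∀ u : {v : Fin n // v ∉ S}, ∃ v : {v : Fin n // v ∈ S}, g (u, v) = false)
  rw [Fintype.card_congr (e1.trans e2), Fintype.card_prod, Fintype.card_fun, Fintype.card_bool]
  congr 1
  have e3 : {g : (({v : Fin n // v ∉ S} × {v : Fin n // v ∈ S}) → Bool) //
      ∀ u, ∃ v, g (u, v) = false} ≃
      {h : ({v : Fin n // v ∉ S} → {v : Fin n // v ∈ S} → Bool) //
      ∀ u, ∃ v, h u v = false} :=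
    Equiv.subtypeEquiv (Equiv.curry _ _ _) (by intro g; rfl)
  rw [Fintype.card_congr e3]
  have e4 : {h : ({v : Fin n // v ∉ S} → {v : Fin n // v ∈ S} → Bool) //
      ∀ u, ∃ v, h u v = false} ≃
      ({v : Fin n // v ∉ S} → {h : {v : Fin n // v ∈ S} → Bool // ∃ v, h v = false}) :=
    Equiv.subtypePiEquivPi (β := fun _ : {v : Fin n // v ∉ S} =>
      ({v : Fin n // v ∈ S} → Bool)) (p := fun _ b => ∃ v, b v = false)
  rw [Fintype.card_congr e4, Fintype.card_fun, cardOut]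
  congr 1
  have : ∀ h : {v : Fin n // v ∈ S} → Bool, (∃ v, h v = false) ↔ ¬ (h = fun _ => true) := by
    intro h
    constructor
    · rintro ⟨v, hv⟩ he
      rw [he] at hv
      simp at hv
    · intro he
      by_contra hc
      push_neg at hc
      exact he (funext fun v => by simpa using hc v)
  rw [Fintype.card_congr (Equiv.subtypeEquivRight this), Fintype.card_subtype_compl,
    Fintype.card_subtype_eq (fun _ => true : {v : Fin n // v ∈ S} → Bool),
    Fintype.card_fun, Fintype.card_bool, cardIn]

theorem card_cross_compl (r : ℕ) (hS : S.card = r) :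
    Fintype.card {e : StrictPairs n // ¬ crossP S e} + (n - r) * r
      = Fintype.card (StrictPairs n) := by
  have cardIn : Fintype.card {v : Fin n // v ∈ S} = r := by
    simpa using (Fintype.card_coe S).trans hS
  have cardOut : Fintype.card {v : Fin n // v ∉ S} = n - r := by
    rw [Fintype.card_subtype_compl, cardIn, Fintype.card_fin]
  have := Fintype.card_subtype_compl (p := crossP S)
  have hc : Fintype.card {e : StrictPairs n // crossP S e} = (n - r) * r := by
    rw [Fintype.card_congr (crossEquiv S), Fintype.card_prod, cardIn, cardOut]
  have hle : Fintype.card {e : StrictPairs n // crossP S e} ≤ Fintype.card (StrictPairs n) :=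
    Fintype.card_subtype_le _
  omega

theorem prob_badS (r : ℕ) (hS : S.card = r) :
    ((Finset.univ.filter (BadS S)).card : ℝ) * (1/2:ℝ) ^ n.choose 2
      = (1 - (1/2:ℝ)^r) ^ (n - r) := by
  have hcard : (Finset.univ.filter (BadS S)).card
      = Fintype.card {G : SimpleGraph (Fin n) // BadS S G} := by
    rw [Fintype.card_subtype]
  set NCc := Fintype.card {e : StrictPairs n // ¬ crossP S e} with hNCc
  have hsum : NCc + (n - r) * r = n.choose 2 := by
    rw [hNCc, card_cross_compl S r hS, card_strictPairs]
  rw [hcard, card_badS S r hS]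
  have h1 : (((2 ^ r - 1) ^ (n - r) * 2 ^ NCc : ℕ) : ℝ)
      = ((2:ℝ)^r - 1) ^ (n - r) * 2 ^ NCc := by
    push_cast [Nat.cast_sub (Nat.one_le_two_pow)]
    ring
  rw [h1]
  have h2 : ((1:ℝ)/2) ^ n.choose 2 = (1/2:ℝ)^NCc * ((1/2:ℝ)^r)^(n-r) := by
    rw [← pow_mul, ← pow_add, hsum.symm]
    ring_nf
  rw [h2]
  have h3 : ((2:ℝ)^NCc) * (1/2:ℝ)^NCc = 1 := by
    rw [← mul_pow]; norm_num
  have h4 : ((2:ℝ)^r - 1) * (1/2:ℝ)^r = 1 - (1/2:ℝ)^r := by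
    have : ((2:ℝ)^r) * (1/2:ℝ)^r = 1 := by rw [← mul_pow]; norm_num
    nlinarith [this]
  calc ((2:ℝ)^r - 1) ^ (n - r) * 2 ^ NCc * ((1/2:ℝ)^NCc * ((1/2:ℝ)^r)^(n-r))
      = (((2:ℝ)^r - 1) * (1/2:ℝ)^r) ^ (n - r) * ((2:ℝ)^NCc * (1/2:ℝ)^NCc) := by
        rw [mul_pow]; ring
    _ = (1 - (1/2:ℝ)^r) ^ (n - r) := by rw [h3, h4, mul_one]

end Count

/-- The common-neighbor property for `r`-tuples. -/
def CN (n : ℕ) (G : SimpleGraph (Fin n)) (r : ℕ) : Prop :=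
  ∀ g : Fin r → Fin n, ∃ u, ∀ i, G.Adj u (g i)

theorem not_CN_imp {n : ℕ} (G : SimpleGraph (Fin n)) (r : ℕ) (hrn : r ≤ n) (h : ¬ CN n G r) :
    ∃ S ∈ Finset.powersetCard r (Finset.univ : Finset (Fin n)), BadS S G := by
  rw [CN] at h
  push_neg at h
  obtain ⟨g, hg⟩ := h
  have him : (Finset.univ.image g).card ≤ r := le_trans (Finset.card_image_le) (by simp)
  obtain ⟨S, hsub, -, hcard⟩ := Finset.exists_subsuperset_card_eq
    (Finset.subset_univ (Finset.univ.image g)) him (by simpa using hrn)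
  refine ⟨S, by simp [Finset.mem_powersetCard, hcard], ?_⟩
  intro u hu
  obtain ⟨i, hi⟩ := hg u
  exact ⟨g i, hsub (Finset.mem_image_of_mem g (Finset.mem_univ i)), hi⟩

theorem prob_not_CN {n r : ℕ} (hrn : r ≤ n) :
    erProb n (1/2) (fun G => ¬ CN n G r)
      ≤ (n.choose r : ℝ) * (1 - (1/2:ℝ)^r) ^ (n - r) := by
  rw [erProb_half]
  have hsub : Finset.univ.filter (fun G : SimpleGraph (Fin n) => ¬ CN n G r) ⊆
      (Finset.powersetCard r (Finset.univ : Finset (Fin n))).biUnion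
        (fun S => Finset.univ.filter (BadS S)) := by
    intro G hG
    simp only [Finset.mem_filter, Finset.mem_univ, true_and] at hG
    obtain ⟨S, hS, hbad⟩ := not_CN_imp G r hrn hG
    refine Finset.mem_biUnion.mpr ⟨S, hS, ?_⟩
    simp only [Finset.mem_filter, Finset.mem_univ, true_and]
    exact hbad
  have hcard : ((Finset.univ.filter (fun G : SimpleGraph (Fin n) => ¬ CN n G r)).card : ℝ)
      * (1/2:ℝ) ^ n.choose 2
      ≤ ∑ S ∈ Finset.powersetCard r (Finset.univ : Finset (Fin n)),
          ((Finset.univ.filter (BadS S)).card : ℝ) * (1/2:ℝ) ^ n.choose 2 := by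
    rw [← Finset.sum_mul]
    apply mul_le_mul_of_nonneg_right _ (by positivity)
    have h1 : (Finset.univ.filter (fun G : SimpleGraph (Fin n) => ¬ CN n G r)).card
        ≤ ∑ S ∈ Finset.powersetCard r (Finset.univ : Finset (Fin n)),
            (Finset.univ.filter (BadS S)).card :=
      le_trans (Finset.card_le_card hsub) Finset.card_biUnion_le
    exact_mod_cast h1
  have heq : ∀ S ∈ Finset.powersetCard r (Finset.univ : Finset (Fin n)),
      ((Finset.univ.filter (BadS S)).card : ℝ) * (1/2:ℝ) ^ n.choose 2
        = (1 - (1/2:ℝ)^r) ^ (n - r) := by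
    intro S hS
    exact prob_badS S r (Finset.mem_powersetCard.mp hS).2
  have hsum : ∑ S ∈ Finset.powersetCard r (Finset.univ : Finset (Fin n)),
      ((Finset.univ.filter (BadS S)).card : ℝ) * (1/2:ℝ) ^ n.choose 2
        = (n.choose r : ℝ) * (1 - (1/2:ℝ)^r) ^ (n - r) := by
    rw [Finset.sum_congr rfl heq, Finset.sum_const, Finset.card_powersetCard, Finset.card_univ,
      Fintype.card_fin, nsmul_eq_mul]
  have hfinal := le_trans hcard (le_of_eq hsum)
  convert hfinal using 4
  congr!
  ext G; simp only [Finset.mem_filter]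

/-! #### The deterministic warmth bound -/

theorem warm_of_CN {V : Type*} (G : SimpleGraph V) (s : ℕ)
    (hCN : ∀ g : Fin (s + 1) → V, ∃ u, ∀ i, G.Adj u (g i)) : IsWarm G (s + 2) := by
  have hd : s + 2 - 2 = s := rfl
  rw [IsWarm, hd]
  intro φ hcold
  obtain ⟨a, ha⟩ := hcold
  apply ha 2
  set g : ℕ → Fin (s+1) → V := fun v i => if (i : ℕ) = 0 then a else φ (s * v + (i : ℕ)) with hg
  have hu : ∀ v : ℕ, ∃ u, ∀ i, G.Adj u (g v i) := fun v => hCN (g v)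
  set u : ℕ → V := fun v => (hu v).choose with huu
  have hup : ∀ v i, G.Adj (u v) (g v i) := fun v => (hu v).choose_spec
  set F : ℕ → V := fun x => if x = 0 then a else if x ≤ s then u x else φ x with hF
  have aux : ∀ i t, t < s → G.Adj (F i) (F (s * i + t + 1)) := by
    intro i t ht
    rcases Nat.eq_zero_or_pos i with rfl | hi
    · have h1 : s * 0 + t + 1 = t + 1 := by ring
      have h2 : F 0 = a := by simp [hF]
      have h3 : F (t + 1) = u (t + 1) := by
        simp only [hF]
        rw [if_neg (by omega), if_pos (by omega)]
      rw [h1, h2, h3]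
      have := hup (t + 1) 0
      have hg0 : g (t + 1) 0 = a := by simp [hg]
      rw [hg0] at this
      exact this.symm
    · have hj : s * i + t + 1 > s := by nlinarith
      have h3 : F (s * i + t + 1) = φ (s * i + t + 1) := by
        simp only [hF]
        rw [if_neg (by omega), if_neg (by omega)]
      by_cases his : i ≤ s
      · have h2 : F i = u i := by
          simp only [hF]
          rw [if_neg (by omega), if_pos his]
        rw [h2, h3]
        have := hup i ⟨t + 1, by omega⟩
        have hgi : g i ⟨t + 1, by omega⟩ = φ (s * i + t + 1) := by
          simp only [hg]
          rw [if_neg (by simp)]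
          congr 1
        rwa [hgi] at this
      · have h2 : F i = φ i := by
          simp only [hF]
          rw [if_neg (by omega), if_neg his]
        rw [h2, h3]
        exact φ.map_adj (Or.inl ⟨t, ht, rfl⟩)
  have hmap : ∀ {x y : ℕ}, (branchTree s).Adj x y → G.Adj (F x) (F y) := by
    intro x y hxy
    rcases hxy with ⟨t, ht, rfl⟩ | ⟨t, ht, rfl⟩
    · exact aux x t ht
    · exact (aux y t ht).symm
  refine ⟨⟨F, hmap⟩, ?_, ?_⟩
  · intro x hx
    match x, hx with
    | 0, hx => simp [treeLevel] at hx
    | (j+1), hx =>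
      have hx' : treeLevel s (j / s) = 1 := by
        rw [treeLevel] at hx
        omega
      have hjs : j / s ≠ 0 := by
        intro h0
        rw [h0, treeLevel] at hx'
        omega
      have hjge : j ≥ s := by
        by_contra hlt
        exact hjs (Nat.div_eq_of_lt (by omega))
      show F (j+1) = φ (j+1)
      simp only [hF]
      rw [if_neg (by omega), if_neg (by omega)]
  · show F 0 = a
    simp [hF]

theorem warmth_ge_of_CN {n : ℕ} (G : SimpleGraph (Fin n)) (r : ℕ) (hr : 1 ≤ r)
    (hCN : CN n G r) : ((r + 1 : ℕ) : ℕ∞) ≤ warmth G := by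
  obtain ⟨s, rfl⟩ : ∃ s, r = s + 1 := ⟨r - 1, by omega⟩
  have hw : IsWarm G (s + 2) := warm_of_CN G s hCN
  apply le_sSup
  exact ⟨s + 2, hw, rfl⟩

/-! #### Asymptotics -/

set_option maxHeartbeats 1000000 in
theorem bound_tendsto (c : ℝ) (hc0 : 0 ≤ c) (hc1 : c < 1) :
    Tendsto (fun n : ℕ =>
      ((n.choose ⌈c * Real.logb 2 n⌉₊ : ℕ) : ℝ) *
        (1 - (1/2:ℝ) ^ ⌈c * Real.logb 2 n⌉₊) ^ (n - ⌈c * Real.logb 2 n⌉₊))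
      Filter.atTop (nhds 0) := by
  set ε : ℝ := 1 - c with hε
  have hε0 : 0 < ε := by linarith
  set r : ℕ → ℕ := fun n => ⌈c * Real.logb 2 n⌉₊ with hr
  have hg : Tendsto (fun n : ℕ => Real.exp (-(1/8) * (n:ℝ) ^ ε)) atTop (nhds 0) := by
    apply Real.tendsto_exp_atBot.comp
    have h1 : Tendsto (fun n : ℕ => (n:ℝ) ^ ε) atTop atTop :=
      (tendsto_rpow_atTop hε0).comp tendsto_natCast_atTop_atTop
    have h2 : Tendsto (fun n : ℕ => (1/8) * (n:ℝ) ^ ε) atTop atTop :=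
      h1.const_mul_atTop (by norm_num)
    have h3 : Tendsto (fun n : ℕ => -((1/8) * (n:ℝ) ^ ε)) atTop atBot :=
      tendsto_neg_atTop_atBot.comp h2
    simpa [neg_mul] using h3
  have ev1 : ∀ᶠ n : ℕ in atTop, (r n : ℝ) ≤ c * Real.logb 2 n + 1 := by
    filter_upwards [eventually_ge_atTop 1] with n hn
    have hnn : (0:ℝ) ≤ c * Real.logb 2 n :=
      mul_nonneg hc0 (Real.logb_nonneg one_lt_two (by exact_mod_cast hn))
    exact le_of_lt (Nat.ceil_lt_add_one hnn)
  have hlog2 : (1/2 : ℝ) < Real.log 2 := by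
    have := Real.log_two_gt_d9
    linarith
  have ev2 : ∀ᶠ n : ℕ in atTop, (r n : ℝ) ≤ (n:ℝ) / 2 := by
    have hB : ∀ᶠ x : ℝ in atTop, ‖Real.log x‖ ≤ (Real.log 2 / 4) * ‖x‖ :=
      Real.isLittleO_log_id_atTop.def (by positivity)
    filter_upwards [ev1, eventually_ge_atTop 8, tendsto_natCast_atTop_atTop.eventually hB]
      with n h1 h8 hb
    have hn1 : (1:ℝ) ≤ n := by exact_mod_cast le_trans (by norm_num) h8
    have hlogn : Real.log n ≤ (Real.log 2 / 4) * n := by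
      calc Real.log n ≤ ‖Real.log n‖ := le_abs_self _
        _ ≤ (Real.log 2 / 4) * ‖(n:ℝ)‖ := hb
        _ = (Real.log 2 / 4) * n := by rw [Real.norm_eq_abs, abs_of_nonneg (by linarith)]
    have hlogb : Real.logb 2 n ≤ (n:ℝ)/4 := by
      rw [Real.logb, div_le_iff₀ (by linarith)]
      calc Real.log n ≤ (Real.log 2 / 4) * n := hlogn
        _ = (n:ℝ)/4 * Real.log 2 := by ring
    have h8' : (8:ℝ) ≤ n := by exact_mod_cast h8
    have hlogbn : 0 ≤ Real.logb 2 n := Real.logb_nonneg one_lt_two hn1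
    have t1 : c * Real.logb 2 n ≤ Real.logb 2 n := by nlinarith
    linarith
  have ev3 : ∀ᶠ n : ℕ in atTop,
      2 * (Real.log n)^2 + Real.log n ≤ (1/8) * (n:ℝ) ^ ε := by
    have hB1 : ∀ᶠ x : ℝ in atTop, ‖Real.log x ^ (2:ℝ)‖ ≤ (1/32) * ‖x ^ ε‖ :=
      (isLittleO_log_rpow_rpow_atTop 2 hε0).def (by norm_num)
    have hB2 : ∀ᶠ x : ℝ in atTop, ‖Real.log x‖ ≤ (1/32) * ‖x ^ ε‖ :=
      (isLittleO_log_rpow_atTop hε0).def (by norm_num)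
    filter_upwards [eventually_ge_atTop 1, tendsto_natCast_atTop_atTop.eventually hB1,
      tendsto_natCast_atTop_atTop.eventually hB2] with n h1 hb1 hb2
    have hn1 : (1:ℝ) ≤ n := by exact_mod_cast h1
    have hln : 0 ≤ Real.log n := Real.log_nonneg hn1
    have hrp : (0:ℝ) ≤ (n:ℝ) ^ ε := Real.rpow_nonneg (by linarith) _
    have e1 : (Real.log n)^2 ≤ (1/32) * (n:ℝ)^ε := by
      have := hb1
      rwa [Real.norm_eq_abs, Real.norm_eq_abs, abs_of_nonneg hrp,
        abs_of_nonneg (Real.rpow_nonneg hln _), Real.rpow_two] at this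
    have e2 : Real.log n ≤ (1/32) * (n:ℝ)^ε := by
      have := hb2
      rwa [Real.norm_eq_abs, Real.norm_eq_abs, abs_of_nonneg hrp, abs_of_nonneg hln] at this
    linarith
  have main : ∀ᶠ n : ℕ in atTop,
      ((n.choose (r n) : ℕ) : ℝ) * (1 - (1/2:ℝ) ^ (r n)) ^ (n - r n)
        ≤ Real.exp (-(1/8) * (n:ℝ) ^ ε) := by
    filter_upwards [ev1, ev2, ev3, eventually_ge_atTop 1] with n h1 h2 h3 h4
    have hn0 : (0:ℝ) < n := by exact_mod_cast h4
    have hn1 : (1:ℝ) ≤ n := by exact_mod_cast h4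
    have hln : 0 ≤ Real.log n := Real.log_nonneg hn1
    set q : ℝ := (1/2:ℝ) ^ (r n) with hq
    have hq0 : 0 < q := by positivity
    have hq1 : q ≤ 1 := pow_le_one₀ (by norm_num) (by norm_num)
    have hrn : r n ≤ n := by
      have : (r n : ℝ) ≤ (n : ℝ) := le_trans h2 (by linarith)
      exact_mod_cast this
    have hmcast : ((n - r n : ℕ) : ℝ) = (n:ℝ) - (r n : ℝ) := by
      rw [Nat.cast_sub hrn]
    have hq_lb : (1/2) * (n:ℝ) ^ (-c) ≤ q := by
      have h2r : (2:ℝ) ^ (r n : ℝ) ≤ 2 * (n:ℝ) ^ c := by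
        calc (2:ℝ) ^ (r n : ℝ) ≤ (2:ℝ) ^ (c * Real.logb 2 n + 1) :=
              Real.rpow_le_rpow_of_exponent_le one_le_two h1
          _ = (2:ℝ) ^ (Real.logb 2 n * c) * 2 := by
              rw [Real.rpow_add two_pos, Real.rpow_one, mul_comm c]
          _ = 2 * (n:ℝ) ^ c := by
              rw [Real.rpow_mul (by norm_num : (0:ℝ) ≤ 2),
                Real.rpow_logb two_pos (by norm_num) hn0]
              ring
      have hq_eq : q = ((2:ℝ) ^ (r n : ℝ))⁻¹ := by
        rw [hq, Real.rpow_natCast, one_div, inv_pow]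
      rw [hq_eq]
      have hpos : (0:ℝ) < 2 * (n:ℝ) ^ c := by positivity
      have := inv_anti₀ (by positivity : (0:ℝ) < (2:ℝ) ^ (r n : ℝ)) h2r
      calc (1/2) * (n:ℝ)^(-c) = (2 * (n:ℝ)^c)⁻¹ := by
            rw [Real.rpow_neg (le_of_lt hn0)]
            field_simp
        _ ≤ ((2:ℝ) ^ (r n : ℝ))⁻¹ := this
    have hqm : (1/4) * (n:ℝ) ^ ε ≤ q * ((n - r n : ℕ) : ℝ) := by
      have hm_lb : (n:ℝ)/2 ≤ ((n - r n : ℕ) : ℝ) := by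
        rw [hmcast]; linarith
      calc (1/4) * (n:ℝ) ^ ε = ((1/2) * (n:ℝ)^(-c)) * ((n:ℝ)/2) := by
            rw [hε, ← Real.rpow_one (n:ℝ)]
            rw [show (n:ℝ) ^ (1:ℝ) = (n:ℝ) from Real.rpow_one _] at *
            rw [show (1:ℝ) - c = -c + 1 by ring, Real.rpow_add hn0, Real.rpow_one]
            ring
        _ ≤ q * ((n - r n : ℕ) : ℝ) := by
            apply mul_le_mul hq_lb hm_lb (by linarith) (le_of_lt hq0)
    have hch : ((n.choose (r n) : ℕ) : ℝ) ≤ Real.exp ((r n : ℝ) * Real.log n) := by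
      calc ((n.choose (r n) : ℕ) : ℝ) ≤ ((n:ℝ) ^ (r n)) / (Nat.factorial (r n) : ℝ) :=
            Nat.choose_le_pow_div (r n) n
        _ ≤ (n:ℝ) ^ (r n) := by
            apply div_le_self (by positivity)
            exact_mod_cast Nat.one_le_iff_ne_zero.mpr (Nat.factorial_pos (r n)).ne'
        _ = Real.exp ((r n : ℝ) * Real.log n) := by
            rw [← Real.log_pow, Real.exp_log (by positivity)]
    have hpow : (1 - q) ^ (n - r n) ≤ Real.exp (-(q * ((n - r n : ℕ) : ℝ))) := by
      calc (1 - q) ^ (n - r n) ≤ (Real.exp (-q)) ^ (n - r n) := by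
            apply pow_le_pow_left₀ (by linarith)
            linarith [Real.add_one_le_exp (-q)]
        _ = Real.exp (((n - r n : ℕ) : ℝ) * (-q)) := by
            rw [Real.exp_nat_mul]
        _ = Real.exp (-(q * ((n - r n : ℕ) : ℝ))) := by ring_nf
    have hrlog : (r n : ℝ) * Real.log n ≤ 2 * (Real.log n)^2 + Real.log n := by
      have hlogb : Real.logb 2 n ≤ 2 * Real.log n := by
        rw [Real.logb, div_le_iff₀ (by linarith)]
        nlinarith
      calc (r n : ℝ) * Real.log n ≤ (c * Real.logb 2 n + 1) * Real.log n :=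
            mul_le_mul_of_nonneg_right h1 hln
        _ ≤ 2 * (Real.log n)^2 + Real.log n := by
            have hlogbn : 0 ≤ Real.logb 2 n := Real.logb_nonneg one_lt_two hn1
            have t1 : c * Real.logb 2 n ≤ Real.logb 2 n := by nlinarith
            have t2 : c * Real.logb 2 n * Real.log n ≤ 2 * Real.log n * Real.log n :=
              mul_le_mul_of_nonneg_right (t1.trans hlogb) hln
            nlinarith [t2]
    calc ((n.choose (r n) : ℕ) : ℝ) * (1 - q) ^ (n - r n)
        ≤ Real.exp ((r n : ℝ) * Real.log n) * Real.exp (-(q * ((n - r n : ℕ) : ℝ))) := by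
          apply mul_le_mul hch hpow (pow_nonneg (by linarith) _) (le_of_lt (Real.exp_pos _))
      _ = Real.exp ((r n : ℝ) * Real.log n - q * ((n - r n : ℕ) : ℝ)) := by
          rw [← Real.exp_add]; ring_nf
      _ ≤ Real.exp (-(1/8) * (n:ℝ) ^ ε) := by
          apply Real.exp_le_exp.mpr
          linarith
  apply squeeze_zero' ?_ main hg
  filter_upwards with n
  have : (0:ℝ) ≤ 1 - (1/2:ℝ) ^ (r n) := by
    have : (1/2:ℝ) ^ (r n) ≤ 1 := pow_le_one₀ (by norm_num) (by norm_num)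
    linarith
  positivity

theorem eventually_r_le (c : ℝ) (hc0 : 0 ≤ c) :
    ∀ᶠ n : ℕ in Filter.atTop, ⌈c * Real.logb 2 n⌉₊ ≤ n := by
  have ev1 : ∀ᶠ n : ℕ in atTop, (⌈c * Real.logb 2 n⌉₊ : ℝ) ≤ c * Real.logb 2 n + 1 := by
    filter_upwards [eventually_ge_atTop 1] with n hn
    have hnn : (0:ℝ) ≤ c * Real.logb 2 n :=
      mul_nonneg hc0 (Real.logb_nonneg one_lt_two (by exact_mod_cast hn))
    exact le_of_lt (Nat.ceil_lt_add_one hnn)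
  have hB : ∀ᶠ x : ℝ in atTop, ‖Real.log x‖ ≤ (Real.log 2 / (4 * (c+1))) * ‖x‖ :=
    Real.isLittleO_log_id_atTop.def (by
      have := Real.log_two_gt_d9
      positivity)
  filter_upwards [ev1, eventually_ge_atTop 8, tendsto_natCast_atTop_atTop.eventually hB]
    with n h1 h8 hb
  have hn1 : (1:ℝ) ≤ n := by exact_mod_cast le_trans (by norm_num) h8
  have hlog2 : (0:ℝ) < Real.log 2 := Real.log_pos one_lt_two
  have hlogn : Real.log n ≤ (Real.log 2 / (4 * (c+1))) * n := by
    calc Real.log n ≤ ‖Real.log n‖ := le_abs_self _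
      _ ≤ (Real.log 2 / (4 * (c+1))) * ‖(n:ℝ)‖ := hb
      _ = (Real.log 2 / (4 * (c+1))) * n := by
          rw [Real.norm_eq_abs, abs_of_nonneg (by linarith)]
  have hlogb : Real.logb 2 n ≤ (n:ℝ)/(4 * (c+1)) := by
    rw [Real.logb, div_le_iff₀ (by linarith)]
    calc Real.log n ≤ (Real.log 2 / (4 * (c+1))) * n := hlogn
      _ = (n:ℝ)/(4*(c+1)) * Real.log 2 := by ring
  have h8' : (8:ℝ) ≤ n := by exact_mod_cast h8
  have hlogbn : 0 ≤ Real.logb 2 n := Real.logb_nonneg one_lt_two hn1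
  have hkey : (⌈c * Real.logb 2 n⌉₊ : ℝ) ≤ (n:ℝ) := by
    have t1 : c * Real.logb 2 n ≤ c * ((n:ℝ)/(4*(c+1))) :=
      mul_le_mul_of_nonneg_left hlogb hc0
    have t2 : c * ((n:ℝ)/(4*(c+1))) ≤ (n:ℝ)/4 := by
      have hcp : (0:ℝ) < c + 1 := by linarith
      rw [← mul_div_assoc, div_le_div_iff₀ (by linarith) (by norm_num)]
      nlinarith
    linarith
  exact_mod_cast hkey

theorem eventually_r_ge (c : ℝ) (hc0 : 0 < c) :
    ∀ᶠ n : ℕ in Filter.atTop, 2 ≤ ⌈c * Real.logb 2 n⌉₊ := by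
  have h1 : Tendsto (fun n : ℕ => c * Real.logb 2 (n:ℝ)) atTop atTop := by
    apply Tendsto.const_mul_atTop hc0
    exact (Real.tendsto_logb_atTop one_lt_two).comp tendsto_natCast_atTop_atTop
  filter_upwards [h1.eventually_gt_atTop 1] with n hn
  have : (1:ℕ) < ⌈c * Real.logb 2 n⌉₊ := by
    rw [Nat.lt_ceil]
    exact_mod_cast hn
  omega

end Aux

/-- Lower bound, dense/uniform case. For constant `δ > 0`, a.a.s.
`w(G(n,1/2)) ≥ (1-δ) log₂ n`. -/
theorem warmth_lower_dense (δ : ℝ) (hδ : 0 < δ) :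
    Filter.Tendsto
      (fun n : ℕ => erProb n (1 / 2)
        (fun G => ENNReal.ofReal ((1 - δ) * Real.logb 2 n) ≤ (warmth G : ℝ≥0∞)))
      Filter.atTop (nhds 1) := by
  set c : ℝ := 1 - δ with hc
  by_cases hc1 : c < 1
  swap
  · exfalso; simp only [hc] at hc1; linarith
  by_cases hc0 : 0 < c
  · -- main case: 0 < c < 1
    set r : ℕ → ℕ := fun n => ⌈c * Real.logb 2 n⌉₊ with hrdef
    have hbt := bound_tendsto c (le_of_lt hc0) hc1
    have hlow : Filter.Tendsto
        (fun n : ℕ => 1 - ((n.choose (r n) : ℕ) : ℝ) *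
          (1 - (1/2:ℝ) ^ (r n)) ^ (n - r n)) Filter.atTop (nhds 1) := by
      have := (tendsto_const_nhds (x := (1:ℝ)) (f := Filter.atTop (α := ℕ))).sub hbt
      simpa using this
    apply tendsto_of_tendsto_of_tendsto_of_le_of_le' hlow tendsto_const_nhds
    · -- eventually, 1 - bound ≤ erProb
      filter_upwards [eventually_r_le c (le_of_lt hc0), eventually_r_ge c hc0,
        Filter.eventually_ge_atTop 1] with n hrn hr2 hn1
      have hrn' : r n ≤ n := hrn
      have hr2' : 2 ≤ r n := hr2
      have himp : ∀ G : SimpleGraph (Fin n), CN n G (r n) →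
          ENNReal.ofReal ((1 - δ) * Real.logb 2 n) ≤ (warmth G : ℝ≥0∞) := by
        intro G hG
        have hwge : ((r n + 1 : ℕ) : ℕ∞) ≤ warmth G :=
          warmth_ge_of_CN G (r n) (by omega) hG
        calc ENNReal.ofReal ((1 - δ) * Real.logb 2 n)
            ≤ ENNReal.ofReal ((r n + 1 : ℕ) : ℝ) := by
              apply ENNReal.ofReal_le_ofReal
              have h1 : c * Real.logb 2 n ≤ (r n : ℝ) := Nat.le_ceil _
              push_cast
              rw [← hc]
              linarith
          _ = ((r n + 1 : ℕ) : ℝ≥0∞) := ENNReal.ofReal_natCast _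
          _ = (((r n + 1 : ℕ) : ℕ∞) : ℝ≥0∞) := (ENat.toENNReal_coe _).symm
          _ ≤ (warmth G : ℝ≥0∞) := ENat.toENNReal_le.2 hwge
      have hmono := erProb_mono n (fun G => CN n G (r n))
        (fun G => ENNReal.ofReal ((1 - δ) * Real.logb 2 n) ≤ (warmth G : ℝ≥0∞)) himp
      have hCNlb : 1 - ((n.choose (r n) : ℕ) : ℝ) * (1 - (1/2:ℝ) ^ (r n)) ^ (n - r n)
          ≤ erProb n (1/2) (fun G => CN n G (r n)) := by
        rw [erProb_compl n (fun G => CN n G (r n))]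
        have := prob_not_CN (n := n) (r := r n) hrn
        linarith
      have h12 : (1:ℝ)/2 = 1/2 := rfl
      calc 1 - ((n.choose (r n) : ℕ) : ℝ) * (1 - (1/2:ℝ) ^ (r n)) ^ (n - r n)
          ≤ erProb n (1/2) (fun G => CN n G (r n)) := hCNlb
        _ ≤ _ := hmono
    · filter_upwards with n
      exact erProb_le_one n _
  · -- trivial case: c ≤ 0, the event always holds for n ≥ 1
    push_neg at hc0
    have hev : ∀ᶠ n : ℕ in Filter.atTop,
        erProb n (1/2) (fun G : SimpleGraph (Fin n) =>
          ENNReal.ofReal ((1 - δ) * Real.logb 2 n) ≤ (warmth G : ℝ≥0∞)) = 1 := by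
      filter_upwards [Filter.eventually_ge_atTop 1] with n hn1
      apply erProb_one_of_forall
      intro G
      have hnp : (0:ℝ) ≤ Real.logb 2 n :=
        Real.logb_nonneg one_lt_two (by exact_mod_cast hn1)
      have : (1 - δ) * Real.logb 2 n ≤ 0 := mul_nonpos_of_nonpos_of_nonneg (by linarith) hnp
      rw [ENNReal.ofReal_of_nonpos this]
      exact zero_le
    have h1 : Filter.Tendsto (fun _ : ℕ => (1:ℝ)) Filter.atTop (nhds 1) := tendsto_const_nhds
    apply h1.congr'
    filter_upwards [hev] with n hn
    exact hn.symm
end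

section
/- Let s ≥ 1 and let v > 1 be an integer with v ≡ 1 (mod s), and let H be a finite simple graph with at least one vertex. If H has property P^s_v (every function f : D(T^s_v) → V(H) is H-extendable), then Hom(T^s, H) contains no cold maps; consequently H is (s+2)-warm and w(H) ≥ s + 2. -/
open scoped Classical ENNReal

lemma treeLevel_le (s x : ℕ) : treeLevel s x ≤ x := by
  induction x using Nat.strong_induction_on with
  | _ x ih =>
    match x with
    | 0 => rw [treeLevel]
    | j + 1 =>
      rw [treeLevel]
      have h1 : j / s ≤ j := Nat.div_le_self j s
      have := ih (j / s) (by omega)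
      omega

/-- If `s ≥ 1`, `v > 1` with `v ≡ 1 (mod s)`, and a finite nonempty
graph `H` has property `P^s_v`, then `Hom(T^s, H)` contains no cold maps; hence `H`
is `(s+2)`-warm and `w(H) ≥ s + 2`. -/
theorem propertyP_implies_warm {W : Type*} [Fintype W] [Nonempty W]
    (H : SimpleGraph W) (s v : ℕ) (hs : 1 ≤ s) (hv : 1 < v)
    (hmod : v ≡ 1 [MOD s]) (hP : PropertyP H s v) :
    (∀ φ : branchTree s →g H, ¬ IsCold H s φ) ∧
      IsWarm H (s + 2) ∧ (s + 2 : ℕ∞) ≤ warmth H := by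
  obtain ⟨c, hc⟩ : s ∣ v - 1 := (Nat.modEq_iff_dvd' (by omega)).mp hmod.symm
  have hleaf : ∀ x : ℕ, v ≤ s * x + s → v ≤ s * x + 1 := by
    intro x hx
    by_contra hcon
    push_neg at hcon
    have h1 : s * x < s * c := by omega
    have h2 : x < c := Nat.lt_of_mul_lt_mul_left h1
    have h3 : s * (x + 1) ≤ s * c := Nat.mul_le_mul_left s h2
    have h4 : s * (x + 1) = s * x + s := Nat.mul_succ s x
    omega
  have key : ∀ φ : branchTree s →g H, ¬ IsCold H s φ := by
    intro φ hcold
    obtain ⟨a, ha⟩ := hcold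
    apply ha v
    -- define f on D
    set f : treeD s v → W :=
      fun x => if ((x : Fin v) : ℕ) = 0 then a else φ ((x : Fin v) : ℕ) with hf
    obtain ⟨φ', hφ'⟩ := hP f
    set g : ℕ → W := fun x => if h : x < v then φ' ⟨x, h⟩ else φ x with hg
    -- crossing edges: φ' agrees with φ on leaves
    have hcross : ∀ (i : ℕ) (hi : i < v), v ≤ s * i + 1 → φ' ⟨i, hi⟩ = φ i := by
      intro i hi hl
      have hmem : (⟨i, hi⟩ : Fin v) ∈ treeD s v := Or.inr hl
      have := hφ' ⟨⟨i, hi⟩, hmem⟩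
      rw [this, hf]
      have hiz : i ≠ 0 := by
        intro h; subst h; simp at hl; omega
      simp only [if_neg hiz]
    have hdir : ∀ i j : ℕ, (∃ t < s, j = s * i + t + 1) → H.Adj (g i) (g j) := by
      rintro i j ⟨t, ht, rfl⟩
      have hij : i < s * i + t + 1 := by
        have : i ≤ s * i := Nat.le_mul_of_pos_left i (by omega)
        omega
      by_cases hj : s * i + t + 1 < v
      · have hi : i < v := by omega
        rw [hg]
        simp only [dif_pos hi, dif_pos hj]
        exact φ'.map_rel (Or.inl ⟨t, ht, rfl⟩)
      · by_cases hi : i < v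
        · have hl : v ≤ s * i + 1 := hleaf i (by omega)
          rw [hg]
          simp only [dif_pos hi, dif_neg hj]
          rw [hcross i hi hl]
          exact φ.map_rel (Or.inl ⟨t, ht, rfl⟩)
        · rw [hg]
          simp only [dif_neg hi, dif_neg hj]
          exact φ.map_rel (Or.inl ⟨t, ht, rfl⟩)
    refine ⟨⟨g, ?_⟩, ?_, ?_⟩
    · rintro i j (h | h)
      · exact hdir i j h
      · exact (hdir j i h).symm
    · intro x hx
      have h1 : treeLevel s x ≤ x := treeLevel_le s x
      have hxv : ¬ x < v := by omega
      show g x = φ x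
      rw [hg]; simp only [dif_neg hxv]
    · show g 0 = a
      have h0 : (0 : ℕ) < v := by omega
      have hmem : (⟨0, h0⟩ : Fin v) ∈ treeD s v := Or.inl rfl
      have := hφ' ⟨⟨0, h0⟩, hmem⟩
      rw [hg]
      simp only [dif_pos h0]
      rw [this, hf]
      simp
  have hwarm : IsWarm H (s + 2) := key
  refine ⟨key, hwarm, ?_⟩
  exact le_sSup ⟨s + 2, hwarm, rfl⟩
end
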